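/- Let S be a regular semigroup with zero element 0. Then any two nilpotent elements of S are conjugate, and if a ∼ b with a nilpotent, then b is nilpotent. -/
import Mathlib


variable {S : Type*} [Semigroup S]

/-- Primary conjugacy: `a = x*y` and `b = y*x` for some `x, y`. -/
def PConj (a b : S) : Prop := ∃ x y : S, a = x * y ∧ b = y * x

/-- Conjugacy: the transitive closure of primary conjugacy. -/
def SConj : S → S → Prop := Relation.TransGen PConj

/-- `pw a n` is `a ^ n` for `n ≥ 1` (with junk value `a` at `n = 0`). -/
def pw (a : S) : ℕ → S
  | 0 => a
  | 1 => a
  | n + 2 => pw a (n + 1) * a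

/-- An element is a group element iff it lies in some subgroup of `S`:
there is an idempotent `e` acting as identity on `a`, and an inverse of `a`
relative to `e`. -/
def IsGroupElement (a : S) : Prop :=
  ∃ e b : S, e * e = e ∧ e * a = a ∧ a * e = a ∧ a * b = e ∧ b * a = e

/-- An element is group-bound if some positive power is a group element. -/
def GroupBound (a : S) : Prop := ∃ n : ℕ, 1 ≤ n ∧ IsGroupElement (pw a n)

/-- Green's L-relation: same principal left ideal in `S¹`. -/
def LRel (a b : S) : Prop :=
  (∃ u : WithOne S, u * (a : WithOne S) = (b : WithOne S)) ∧
  (∃ u : WithOne S, u * (b : WithOne S) = (a : WithOne S))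

/-- Green's R-relation: same principal right ideal in `S¹`. -/
def RRel (a b : S) : Prop :=
  (∃ u : WithOne S, (a : WithOne S) * u = (b : WithOne S)) ∧
  (∃ u : WithOne S, (b : WithOne S) * u = (a : WithOne S))

/-- Green's H-relation. -/
def HRel (a b : S) : Prop := LRel a b ∧ RRel a b

/-- Green's D-relation. -/
def DRel (a b : S) : Prop := ∃ c : S, LRel a c ∧ RRel c b

lemma pw_one' (a : S) : pw a 1 = a := rfl

lemma pw_succ' (a : S) (n : ℕ) (h : 1 ≤ n) : pw a (n + 1) = pw a n * a := by
  cases n with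
  | zero => omega
  | succ m => rfl

lemma PConj.symm' {a b : S} (h : PConj a b) : PConj b a := by
  obtain ⟨x, y, h1, h2⟩ := h
  exact ⟨y, x, h2, h1⟩

lemma SConj.symm' {a b : S} (h : SConj a b) : SConj b a := by
  induction h with
  | single h => exact Relation.TransGen.single h.symm'
  | tail _ h ih => exact Relation.TransGen.head h.symm' ih

/-- If `a*b*a = a`, then powers of `a*a*b` are `pw a (n+1) * b`. -/
lemma pw_aab (a b : S) (hab : a * b * a = a) (n : ℕ) (h : 1 ≤ n) :
    pw (a * a * b) n = pw a (n + 1) * b := by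
  induction n with
  | zero => omega
  | succ m ih =>
    rcases Nat.eq_or_lt_of_le h with h1 | h1
    · -- m + 1 = 1
      have : m = 0 := by omega
      subst this
      show a * a * b = pw a 2 * b
      rfl
    · have hm : 1 ≤ m := by omega
      rw [pw_succ' _ _ (by omega), ih hm, pw_succ' a (m + 1) (by omega)]
      have : pw a (m + 1) * b * (a * a * b) = pw a (m + 1) * a * b := by
        have : pw a (m + 1) * b * (a * a * b)
            = pw a (m + 1) * ((b * a) * a * b) := by
          simp [mul_assoc]
        rw [this]
        have h2 : pw a (m + 1) * ((b * a) * a * b)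
            = (pw a m * (a * b * a)) * (a * b) := by
          rw [pw_succ' a m hm]; simp [mul_assoc]
        rw [h2, hab, ← pw_succ' a m hm]
        simp [mul_assoc]
      rw [this]

/-- Nilpotency transfers along primary conjugacy. -/
lemma pconj_nilpotent (z : S) (hz : ∀ x : S, z * x = z ∧ x * z = z)
    {a b : S} (h : PConj a b) (hn : ∃ n : ℕ, 1 ≤ n ∧ pw a n = z) :
    ∃ n : ℕ, 1 ≤ n ∧ pw b n = z := by
  obtain ⟨x, y, ha, hb⟩ := h
  obtain ⟨n, hn1, hnz⟩ := hn
  have key : ∀ k : ℕ, 1 ≤ k → pw b (k + 1) = y * pw a k * x := by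
    intro k hk
    induction k with
    | zero => omega
    | succ m ih =>
      rcases Nat.eq_or_lt_of_le hk with h1 | h1
      · have : m = 0 := by omega
        subst this
        show b * b = y * pw a 1 * x
        rw [hb, pw_one', ha]
        simp [mul_assoc]
      · have hm : 1 ≤ m := by omega
        rw [pw_succ' b (m + 1) (by omega), ih hm, hb,
          pw_succ' a m hm]
        calc y * pw a m * x * (y * x) = y * (pw a m * (x * y)) * x := by
              simp [mul_assoc]
          _ = y * (pw a m * a) * x := by rw [← ha]
  refine ⟨n + 1, by omega, ?_⟩
  rw [key n hn1, hnz, (hz y).2, (hz x).1]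

/-- Every nilpotent is conjugate to the zero `z`. -/
lemma nilpotent_sconj_zero
    (hreg : ∀ x : S, ∃ y : S, x = x * y * x)
    (z : S) (hz : ∀ x : S, z * x = z ∧ x * z = z) :
    ∀ n : ℕ, 1 ≤ n → ∀ a : S, pw a n = z → SConj a z := by
  intro n
  induction n using Nat.strong_induction_on with
  | _ n ih =>
    intro hn a haz
    have hzz : SConj z z :=
      Relation.TransGen.single ⟨z, z, (hz z).1.symm, (hz z).1.symm⟩
    rcases Nat.eq_or_lt_of_le hn with h1 | h1
    · -- n = 1, so a = z
      rw [← h1] at haz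
      rw [pw_one'] at haz
      rw [haz]; exact hzz
    · -- n ≥ 2
      obtain ⟨b, hb⟩ := hreg a
      have hab : a * b * a = a := hb.symm
      set c := a * a * b with hc
      have hpc : PConj a c := ⟨a * b, a, hab.symm, by rw [hc, mul_assoc]⟩
      have hcz : pw c (n - 1) = z := by
        rw [pw_aab a b hab (n - 1) (by omega)]
        have : n - 1 + 1 = n := by omega
        rw [this, haz, (hz b).1]
      have := ih (n - 1) (by omega) (by omega) c hcz
      exact Relation.TransGen.head hpc this

theorem nilpotents_conjugate_in_regular_semigroup_with_zero
    (hreg : ∀ x : S, ∃ y : S, x = x * y * x)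
    (z : S) (hz : ∀ x : S, z * x = z ∧ x * z = z) :
    (∀ a b : S, (∃ n : ℕ, 1 ≤ n ∧ pw a n = z) → (∃ n : ℕ, 1 ≤ n ∧ pw b n = z) →
      SConj a b) ∧
    (∀ a b : S, SConj a b → (∃ n : ℕ, 1 ≤ n ∧ pw a n = z) →
      (∃ n : ℕ, 1 ≤ n ∧ pw b n = z)) := by
  constructor
  · rintro a b ⟨n, hn, ha⟩ ⟨m, hm, hbm⟩
    have h1 : SConj a z := nilpotent_sconj_zero hreg z hz n hn a ha
    have h2 : SConj b z := nilpotent_sconj_zero hreg z hz m hm b hbm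
    exact h1.trans h2.symm'
  · intro a b hab hn
    induction hab with
    | single h => exact pconj_nilpotent z hz h hn
    | tail _ h ih => exact pconj_nilpotent z hz h ih
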